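/- Let S be a nonempty finite set and let p : S × ℝ^m → ℝ be such that for every x ∈ S the map θ ↦ p(x,θ) is twice continuously differentiable and p(x,θ) > 0. Fix θ₀, let p̂₀(x) = p(x,θ₀)/Z(θ₀) with Z(θ) = Σ_{x∈S} p(x,θ), and define G(θ) = ln( Σ_{x∈S} p̂₀(x) · p(x,θ)/p(x,θ₀) ) − Σ_{x∈S} p̂₀(x) · ln( p(x,θ)/p(x,θ₀) ). Then G(θ₀) = 0, the gradient of G at θ₀ vanishes, and the Hessian of G at θ₀ equals the Fisher information matrix of the unnormalized family: ∂²G/∂θ_i∂θ_j (θ₀) = Σ_{x∈S} p̂₀(x) ∂_i ln p(x,θ₀) ∂_j ln p(x,θ₀) − (Σ_{x∈S} p̂₀(x) ∂_i ln p(x,θ₀)) (Σ_{x∈S} p̂₀(x) ∂_j ln p(x,θ₀)). -/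

import Mathlib

/-- The Hessian of the AD-aware KL divergence
`G(θ) = ln ⟨p(·,θ)/p(·,θ₀)⟩_{p̂₀} − ⟨ln (p(·,θ)/p(·,θ₀))⟩_{p̂₀}`
(equation (22) of the paper) at the base point `θ₀` equals the Fisher
information matrix of the unnormalized family (equation (21)); moreover
`G(θ₀) = 0` and the gradient of `G` at `θ₀` vanishes.  Here
`p̂₀ = p(·,θ₀)/Z(θ₀)` with `Z θ = ∑ x, p x θ`. -/
theorem stmt_10 (S : Type*) [Fintype S] [Nonempty S] (m : ℕ)
    (p : S → (Fin m → ℝ) → ℝ) (hp : ∀ x θ, 0 < p x θ)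
    (hpd : ∀ x, ContDiff ℝ 2 (p x)) (θ₀ : Fin m → ℝ)
    (G : (Fin m → ℝ) → ℝ)
    (hG : ∀ θ, G θ = Real.log (∑ x, (p x θ₀ / ∑ y, p y θ₀) * (p x θ / p x θ₀))
        - ∑ x, (p x θ₀ / ∑ y, p y θ₀) * Real.log (p x θ / p x θ₀)) :
    G θ₀ = 0 ∧ fderiv ℝ G θ₀ = 0 ∧
    ∀ i j : Fin m,
      fderiv ℝ (fun t => fderiv ℝ G t (Pi.single j 1)) θ₀ (Pi.single i 1)
        = (∑ x, (p x θ₀ / ∑ y, p y θ₀) *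
              (fderiv ℝ (fun t => Real.log (p x t)) θ₀ (Pi.single i 1) *
               fderiv ℝ (fun t => Real.log (p x t)) θ₀ (Pi.single j 1)))
          - (∑ x, (p x θ₀ / ∑ y, p y θ₀) *
                fderiv ℝ (fun t => Real.log (p x t)) θ₀ (Pi.single i 1))
            * (∑ x, (p x θ₀ / ∑ y, p y θ₀) *
                fderiv ℝ (fun t => Real.log (p x t)) θ₀ (Pi.single j 1)) := by
  classical
  have hZpos : (0:ℝ) < ∑ y, p y θ₀ :=
    Finset.sum_pos (fun y _ => hp y θ₀) Finset.univ_nonempty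
  set Z : ℝ := ∑ y, p y θ₀ with hZdef
  set w : S → ℝ := fun x => p x θ₀ / Z with hwdef
  have hpne : ∀ x θ, p x θ ≠ 0 := fun x θ => (hp x θ).ne'
  have hwpos : ∀ x, 0 < w x := fun x => div_pos (hp x θ₀) hZpos
  have hwsum : ∑ x, w x = 1 := by
    simp only [hwdef, ← Finset.sum_div]
    exact div_self hZpos.ne'
  -- the coefficient a x = w x * (p x θ₀)⁻¹
  set a : S → ℝ := fun x => w x * (p x θ₀)⁻¹ with hadef
  have hapos : ∀ x, 0 < a x := fun x => mul_pos (hwpos x) (inv_pos.2 (hp x θ₀))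
  set F : (Fin m → ℝ) → ℝ := fun θ => ∑ x, a x * p x θ with hFdef
  set L : (Fin m → ℝ) → ℝ := fun θ => ∑ x, w x * Real.log (p x θ) with hLdef
  have hFpos : ∀ t, 0 < F t := fun t =>
    Finset.sum_pos (fun x _ => mul_pos (hapos x) (hp x t)) Finset.univ_nonempty
  have hF0 : F θ₀ = 1 := by
    have : ∀ x : S, a x * p x θ₀ = w x := by
      intro x
      simp only [hadef]
      rw [mul_assoc, inv_mul_cancel₀ (hpne x θ₀), mul_one]
    simp only [hFdef, this, hwsum]
  -- rewrite G
  have hG' : ∀ θ, G θ = Real.log (F θ) - (L θ - L θ₀) := by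
    intro θ
    rw [hG θ]
    congr 1
    · congr 1
      refine Finset.sum_congr rfl fun x _ => ?_
      simp only [hadef]
      rw [div_eq_mul_inv]
      ring
    · simp only [hLdef, ← Finset.sum_sub_distrib, ← mul_sub]
      refine Finset.sum_congr rfl fun x _ => ?_
      rw [Real.log_div (hpne x θ) (hpne x θ₀)]
  -- differentiability facts
  have hdp : ∀ x, Differentiable ℝ (p x) := fun x => (hpd x).differentiable two_ne_zero
  have hD : ∀ x t, HasFDerivAt (p x) (fderiv ℝ (p x) t) t := fun x t =>
    (hdp x t).hasFDerivAt
  have hDdiff : ∀ x, Differentiable ℝ (fderiv ℝ (p x)) := fun x =>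
    ((hpd x).fderiv_right (m := 1) (le_refl 2)).differentiable one_ne_zero
  -- first derivative of F
  set ΦF : (Fin m → ℝ) → ((Fin m → ℝ) →L[ℝ] ℝ) :=
    fun t => ∑ x, a x • fderiv ℝ (p x) t with hΦFdef
  have hFd : ∀ t, HasFDerivAt F (ΦF t) t := by
    intro t
    exact HasFDerivAt.fun_sum fun x _ => (hD x t).const_mul (a x)
  -- first derivative of L
  set ΦL : (Fin m → ℝ) → ((Fin m → ℝ) →L[ℝ] ℝ) :=
    fun t => ∑ x, (w x * (p x t)⁻¹) • fderiv ℝ (p x) t with hΦLdef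
  have hLd : ∀ t, HasFDerivAt L (ΦL t) t := by
    intro t
    refine HasFDerivAt.fun_sum fun x _ => ?_
    have h := ((hD x t).log (hpne x t)).const_mul (w x)
    rwa [smul_smul] at h
  -- first derivative of G
  set Φ : (Fin m → ℝ) → ((Fin m → ℝ) →L[ℝ] ℝ) :=
    fun t => (F t)⁻¹ • ΦF t - ΦL t with hΦdef
  have hGd : ∀ t, HasFDerivAt G (Φ t) t := by
    intro t
    have hg : G = fun θ => Real.log (F θ) - (L θ - L θ₀) := funext hG'
    rw [hg]
    exact ((hFd t).log (hFpos t).ne').sub ((hLd t).sub_const _)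
  have hfderivG : ∀ t, fderiv ℝ G t = Φ t := fun t => (hGd t).fderiv
  -- ΦF θ₀ = ΦL θ₀
  have hΦcoincide : ΦF θ₀ = ΦL θ₀ := by
    simp only [hΦFdef, hΦLdef, hadef]
  have hΦ0 : Φ θ₀ = 0 := by
    rw [hΦdef]
    simp only [hF0, inv_one, one_smul, hΦcoincide, sub_self]
  refine ⟨?_, ?_, ?_⟩
  · rw [hG' θ₀, hF0, Real.log_one, sub_self, sub_zero]
  · rw [hfderivG θ₀, hΦ0]
  · intro i j
    set ei : Fin m → ℝ := Pi.single i 1 with heidef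
    set ej : Fin m → ℝ := Pi.single j 1 with hejdef
    have hu : ∀ x, HasFDerivAt (fun t => fderiv ℝ (p x) t ej)
        ((ContinuousLinearMap.apply ℝ ℝ ej).comp (fderiv ℝ (fderiv ℝ (p x)) θ₀)) θ₀ := by
      intro x
      exact (ContinuousLinearMap.apply ℝ ℝ ej).hasFDerivAt.comp θ₀ ((hDdiff x θ₀).hasFDerivAt)
    set K : S → ((Fin m → ℝ) →L[ℝ] ℝ) :=
      fun x => (ContinuousLinearMap.apply ℝ ℝ ej).comp (fderiv ℝ (fderiv ℝ (p x)) θ₀) with hKdef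
    set S1 : (Fin m → ℝ) → ℝ := fun t => ∑ x, a x * fderiv ℝ (p x) t ej with hS1def
    have hS1d : HasFDerivAt S1 (∑ x, a x • K x) θ₀ :=
      HasFDerivAt.fun_sum fun x _ => (hu x).const_mul (a x)
    set S2 : (Fin m → ℝ) → ℝ := fun t => ∑ x, (w x * (p x t)⁻¹) * fderiv ℝ (p x) t ej
      with hS2def
    have hinv : ∀ x, HasFDerivAt (fun t => (p x t)⁻¹)
        ((-(p x θ₀ ^ 2)⁻¹) • fderiv ℝ (p x) θ₀) θ₀ := fun x =>
      (hasDerivAt_inv (hpne x θ₀)).comp_hasFDerivAt θ₀ (hD x θ₀)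
    have hg : ∀ x, HasFDerivAt (fun t => w x * (p x t)⁻¹)
        (w x • ((-(p x θ₀ ^ 2)⁻¹) • fderiv ℝ (p x) θ₀)) θ₀ := fun x =>
      (hinv x).const_mul (w x)
    have hS2d : HasFDerivAt S2
        (∑ x, ((w x * (p x θ₀)⁻¹) • K x
          + (fderiv ℝ (p x) θ₀ ej) • (w x • ((-(p x θ₀ ^ 2)⁻¹) • fderiv ℝ (p x) θ₀)))) θ₀ :=
      HasFDerivAt.fun_sum fun x _ => (hg x).fun_mul (hu x)
    have hFinv : HasFDerivAt (fun t => (F t)⁻¹) ((-(F θ₀ ^ 2)⁻¹) • ΦF θ₀) θ₀ :=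
      (hasDerivAt_inv (hFpos θ₀).ne').comp_hasFDerivAt θ₀ (hFd θ₀)
    set ψ : (Fin m → ℝ) → ℝ := fun t => (F t)⁻¹ * S1 t - S2 t with hψdef
    have hψd : HasFDerivAt ψ
        (((F θ₀)⁻¹ • (∑ x, a x • K x) + S1 θ₀ • ((-(F θ₀ ^ 2)⁻¹) • ΦF θ₀))
          - ∑ x, ((w x * (p x θ₀)⁻¹) • K x
              + (fderiv ℝ (p x) θ₀ ej) • (w x • ((-(p x θ₀ ^ 2)⁻¹) • fderiv ℝ (p x) θ₀))))
        θ₀ := (hFinv.mul hS1d).sub hS2d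
    have hfun : (fun t => fderiv ℝ G t ej) = ψ := by
      funext t
      rw [hfderivG t]
      simp only [hΦdef, hψdef, hS1def, hS2def, hΦFdef, hΦLdef,
        ContinuousLinearMap.sub_apply, ContinuousLinearMap.smul_apply,
        ContinuousLinearMap.sum_apply, smul_eq_mul, Finset.mul_sum]
    rw [hfun, hψd.fderiv]
    have hlog : ∀ (x : S) (v : Fin m → ℝ), fderiv ℝ (fun t => Real.log (p x t)) θ₀ v
        = (p x θ₀)⁻¹ * fderiv ℝ (p x) θ₀ v := by
      intro x v
      rw [((hD x θ₀).log (hpne x θ₀)).fderiv]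
      simp
    simp only [hlog, hF0, hS1def, hΦFdef, hKdef, hadef, hwdef,
      ContinuousLinearMap.sub_apply, ContinuousLinearMap.add_apply,
      ContinuousLinearMap.smul_apply, ContinuousLinearMap.sum_apply,
      ContinuousLinearMap.comp_apply, ContinuousLinearMap.apply_apply, smul_eq_mul,
      one_pow, inv_one, one_mul, neg_mul]
    rw [Finset.sum_add_distrib]
    have h2 : ∑ x : S, (fderiv ℝ (p x) θ₀) ej *
          (p x θ₀ / Z * -((p x θ₀ ^ 2)⁻¹ * (fderiv ℝ (p x) θ₀) ei))
        = -∑ x : S, p x θ₀ / Z *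
            ((p x θ₀)⁻¹ * (fderiv ℝ (p x) θ₀) ei * ((p x θ₀)⁻¹ * (fderiv ℝ (p x) θ₀) ej)) := by
      rw [← Finset.sum_neg_distrib]
      refine Finset.sum_congr rfl fun x _ => ?_
      ring
    rw [h2]
    have h3 : ∀ (v : Fin m → ℝ), ∑ x : S, p x θ₀ / Z * (p x θ₀)⁻¹ * (fderiv ℝ (p x) θ₀) v
        = ∑ x : S, p x θ₀ / Z * ((p x θ₀)⁻¹ * (fderiv ℝ (p x) θ₀) v) :=
      fun v => Finset.sum_congr rfl fun x _ => mul_assoc _ _ _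
    rw [h3 ei, h3 ej]
    ring
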